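/- Every M×N matrix with unit-norm columns, where N ≥ M, has worst-case coherence μ ≥ √((N−M)/(M(N−1))). -/

import Mathlib

open Matrix Finset

/-- Welch bound: every M×N matrix with unit-norm columns (N ≥ M, at least two columns)
has worst-case coherence μ ≥ √((N−M)/(M(N−1))). -/
theorem stmt_2 (M N : ℕ) (hM : 0 < M) (hMN : M ≤ N) (hN : 1 < N)
    (Φ : Matrix (Fin M) (Fin N) ℂ)
    (h_unit : ∀ j : Fin N, ∑ m : Fin M, ‖Φ m j‖ ^ 2 = 1)
    (μ : ℝ)
    (hμ : ∀ i j : Fin N, i ≠ j → ‖∑ m : Fin M, star (Φ m i) * Φ m j‖ ≤ μ) :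
    Real.sqrt (((N : ℝ) - M) / (M * ((N : ℝ) - 1))) ≤ μ := by
  set G : Matrix (Fin N) (Fin N) ℂ := Φᴴ * Φ with hG
  set A : Matrix (Fin M) (Fin M) ℂ := Φ * Φᴴ with hA
  have hGapply : ∀ i j, G i j = ∑ m : Fin M, star (Φ m i) * Φ m j := by
    intro i j
    simp [hG, Matrix.mul_apply, Matrix.conjTranspose_apply]
  -- G is Hermitian
  have hGherm : Gᴴ = G := by
    simp [hG, Matrix.conjTranspose_mul]
  have hGconj : ∀ i j, (starRingEnd ℂ) (G i j) = G j i := by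
    intro i j
    conv_rhs => rw [← hGherm]
    simp [Matrix.conjTranspose_apply]
  have hAherm : Aᴴ = A := by
    simp [hA, Matrix.conjTranspose_mul]
  have hAconj : ∀ i j, (starRingEnd ℂ) (A i j) = A j i := by
    intro i j
    conv_rhs => rw [← hAherm]
    simp [Matrix.conjTranspose_apply]
  -- diagonal of G is 1
  have hGdiag : ∀ j, G j j = 1 := by
    intro j
    rw [hGapply]
    have : ∀ m : Fin M, star (Φ m j) * Φ m j = ((‖Φ m j‖ ^ 2 : ℝ) : ℂ) := by
      intro m
      rw [Complex.star_def, mul_comm, Complex.mul_conj]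
      norm_cast
      simp [Complex.normSq_eq_norm_sq]
    rw [Finset.sum_congr rfl fun m _ => this m]
    rw [← Complex.ofReal_sum]
    rw [h_unit j]
    norm_num
  -- traces of squares agree
  have htr : (G * G).trace = (A * A).trace := by
    simp only [hG, hA, Matrix.mul_assoc]
    rw [Matrix.trace_mul_comm Φᴴ]
    simp only [Matrix.mul_assoc]
  -- S : Frobenius norm squared of G
  set S : ℝ := ∑ i : Fin N, ∑ j : Fin N, Complex.normSq (G i j) with hS
  have hStrace : S = ((G * G).trace).re := by
    rw [Matrix.trace]
    simp only [Matrix.diag_apply, Matrix.mul_apply]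
    rw [Complex.re_sum]
    rw [hS]
    congr 1; funext i
    rw [Complex.re_sum]
    congr 1; funext j
    rw [← hGconj i j, Complex.mul_conj]
    simp
  have hTtrace : ((A * A).trace).re = ∑ m : Fin M, ∑ m' : Fin M, Complex.normSq (A m m') := by
    rw [Matrix.trace]
    simp only [Matrix.diag_apply, Matrix.mul_apply]
    rw [Complex.re_sum]
    congr 1; funext m
    rw [Complex.re_sum]
    congr 1; funext m'
    rw [← hAconj m m', Complex.mul_conj]
    simp
  -- sum of re of diagonal of A is N
  have hAdiag : ∑ m : Fin M, (A m m).re = (N : ℝ) := by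
    have : ∀ m, (A m m).re = ∑ j : Fin N, ‖Φ m j‖ ^ 2 := by
      intro m
      rw [hA, Matrix.mul_apply, Complex.re_sum]
      congr 1; funext j
      rw [Matrix.conjTranspose_apply]
      rw [mul_comm, Complex.star_def, mul_comm, Complex.mul_conj]
      simp only [Complex.normSq_eq_norm_sq]
      norm_cast
    rw [Finset.sum_congr rfl fun m _ => this m, Finset.sum_comm]
    rw [Finset.sum_congr rfl fun j _ => h_unit j]
    simp
  -- lower bound: N^2 ≤ M * S
  have hlow : (N : ℝ) ^ 2 ≤ (M : ℝ) * S := by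
    have h1 : (∑ m : Fin M, (A m m).re) ^ 2 ≤ (M : ℝ) * ∑ m : Fin M, (A m m).re ^ 2 := by
      simpa using sq_sum_le_card_mul_sum_sq (s := (Finset.univ : Finset (Fin M)))
        (f := fun m => (A m m).re)
    have h2 : ∑ m : Fin M, (A m m).re ^ 2 ≤ ∑ m : Fin M, ∑ m' : Fin M, Complex.normSq (A m m') := by
      apply Finset.sum_le_sum
      intro m _
      calc (A m m).re ^ 2 ≤ Complex.normSq (A m m) := by
            rw [Complex.normSq_apply]; nlinarith [sq_nonneg (A m m).im]
        _ ≤ ∑ m' : Fin M, Complex.normSq (A m m') := by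
            apply Finset.single_le_sum (f := fun m' => Complex.normSq (A m m'))
              (fun _ _ => Complex.normSq_nonneg _) (Finset.mem_univ m)
    rw [hAdiag] at h1
    have : S = ∑ m : Fin M, ∑ m' : Fin M, Complex.normSq (A m m') := by
      rw [hStrace, htr, hTtrace]
    rw [this]
    calc (N : ℝ) ^ 2 ≤ (M : ℝ) * ∑ m : Fin M, (A m m).re ^ 2 := h1
      _ ≤ _ := by
          apply mul_le_mul_of_nonneg_left h2 (by positivity)
  -- μ ≥ 0
  have hμ0 : 0 ≤ μ := by
    have h01 : (⟨0, by omega⟩ : Fin N) ≠ (⟨1, by omega⟩ : Fin N) := by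
      simp [Fin.ext_iff]
    exact le_trans (norm_nonneg _) (hμ _ _ h01)
  -- upper bound: S ≤ N + N*(N-1)*μ^2
  have hup : S ≤ (N : ℝ) + (N : ℝ) * ((N : ℝ) - 1) * μ ^ 2 := by
    have hrow : ∀ i : Fin N, ∑ j : Fin N, Complex.normSq (G i j)
        ≤ 1 + ((N : ℝ) - 1) * μ ^ 2 := by
      intro i
      rw [← Finset.add_sum_erase _ _ (Finset.mem_univ i)]
      have hd : Complex.normSq (G i i) = 1 := by rw [hGdiag]; simp
      rw [hd]
      gcongr 1 + ?_
      calc ∑ j ∈ Finset.univ.erase i, Complex.normSq (G i j)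
          ≤ ∑ j ∈ Finset.univ.erase i, μ ^ 2 := by
            apply Finset.sum_le_sum
            intro j hj
            have hij : i ≠ j := (Finset.ne_of_mem_erase hj).symm
            have := hμ i j hij
            rw [← hGapply i j] at this
            have hn : Complex.normSq (G i j) = ‖G i j‖ ^ 2 := by
              rw [Complex.normSq_eq_norm_sq]
            rw [hn]
            exact pow_le_pow_left₀ (norm_nonneg _) this 2
        _ = ((N : ℝ) - 1) * μ ^ 2 := by
            rw [Finset.sum_const, Finset.card_erase_of_mem (Finset.mem_univ i)]
            simp [nsmul_eq_mul]
            left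
            push_cast [Nat.cast_sub (by omega : 1 ≤ N)]
            ring
    calc S ≤ ∑ _i : Fin N, (1 + ((N : ℝ) - 1) * μ ^ 2) := Finset.sum_le_sum fun i _ => hrow i
      _ = (N : ℝ) + (N : ℝ) * ((N : ℝ) - 1) * μ ^ 2 := by
          rw [Finset.sum_const]; simp [nsmul_eq_mul]; ring
  -- combine
  have hN0 : (0:ℝ) < N := by positivity
  have hM0 : (0:ℝ) < M := by positivity
  have hN1 : (0:ℝ) < (N:ℝ) - 1 := by
    have : (1:ℝ) < N := by exact_mod_cast hN
    linarith
  have hkey : ((N : ℝ) - M) / ((M : ℝ) * ((N : ℝ) - 1)) ≤ μ ^ 2 := by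
    rw [div_le_iff₀ (by positivity)]
    nlinarith [hlow, hup, mul_le_mul_of_nonneg_left hup hM0.le]
  calc Real.sqrt (((N : ℝ) - M) / (M * ((N : ℝ) - 1)))
      ≤ Real.sqrt (μ ^ 2) := Real.sqrt_le_sqrt hkey
    _ = μ := by rw [Real.sqrt_sq hμ0]
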